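/- arXiv:1908.01535 — 2 statements merged into one kernel-verified Lean document; each statement's English description precedes it below -/
import Mathlib

section
/- Every modular flat of a round matroid is round; that is, if M is a round matroid and X is a modular flat of M, then the restriction M|X is round. -/
open scoped Classical Matroid

namespace Paper

variable {α : Type*}

/-- The rank of a set in a matroid: the maximum size of an independent subset. -/
noncomputable def mrk (M : Matroid α) (X : Set α) : ℕ :=
  sSup {n | ∃ I, M.Indep I ∧ I ⊆ X ∧ I.ncard = n}

/-- A circuit of a matroid: a minimal dependent subset of the ground set. -/
def Circuit (M : Matroid α) (C : Set α) : Prop :=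
  C ⊆ M.E ∧ ¬ M.Indep C ∧ ∀ D ⊂ C, M.Indep D

/-- A matroid is simple if every subset of the ground set with at most two
elements is independent. -/
def SimpleM (M : Matroid α) : Prop :=
  ∀ X ⊆ M.E, X.ncard ≤ 2 → M.Indep X

/-- A modular flat: a flat `X` with `r X + r Y = r (X ⊓ Y) + r (X ⊔ Y)` for every flat `Y`
(meet of flats is intersection; join is the closure of the union). -/
def ModularFlat (M : Matroid α) (X : Set α) : Prop :=
  M.IsFlat X ∧ ∀ Y, M.IsFlat Y →
    mrk M X + mrk M Y = mrk M (X ∩ Y) + mrk M (M.closure (X ∪ Y))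

/-- A matroid is round if its ground set is not the union of two proper flats. -/
def Round (M : Matroid α) : Prop :=
  ¬ ∃ F₁ F₂ : Set α, M.IsFlat F₁ ∧ M.IsFlat F₂ ∧ F₁ ≠ M.E ∧ F₂ ≠ M.E ∧ M.E = F₁ ∪ F₂

open Set

section Aux

variable {M : Matroid α} {S T I J F F' X Z : Set α} {e : α}

private lemma mrk_set_nonempty (M : Matroid α) (S : Set α) :
    {n | ∃ I, M.Indep I ∧ I ⊆ S ∧ I.ncard = n}.Nonempty :=
  ⟨0, ∅, M.empty_indep, empty_subset _, by simp⟩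

private lemma mrk_set_bdd (hfin : M.E.Finite) (S : Set α) :
    BddAbove {n | ∃ I, M.Indep I ∧ I ⊆ S ∧ I.ncard = n} := by
  refine ⟨M.E.ncard, ?_⟩
  rintro n ⟨I, hI, -, rfl⟩
  exact Set.ncard_le_ncard hI.subset_ground hfin

private lemma le_mrk (hfin : M.E.Finite) (hI : M.Indep I) (hIS : I ⊆ S) :
    I.ncard ≤ mrk M S :=
  le_csSup (mrk_set_bdd hfin S) ⟨I, hI, hIS, rfl⟩

private lemma mrk_le {n : ℕ} (h : ∀ I, M.Indep I → I ⊆ S → I.ncard ≤ n) :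
    mrk M S ≤ n :=
  csSup_le (mrk_set_nonempty M S) (by rintro m ⟨I, hI, hIS, rfl⟩; exact h I hI hIS)

private lemma mrk_mono (hfin : M.E.Finite) (h : S ⊆ T) : mrk M S ≤ mrk M T :=
  mrk_le fun I hI hIS => le_mrk hfin hI (hIS.trans h)

private lemma basis_mrk_eq (hfin : M.E.Finite) (hI : M.IsBasis I S) : mrk M S = I.ncard := by
  refine le_antisymm (mrk_le fun J hJ hJS => ?_) (le_mrk hfin hI.indep hI.subset)
  obtain ⟨J', hJ', hJJ'⟩ := hJ.subset_isBasis_of_subset hJS hI.subset_ground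
  have h1 : J'.ncard = I.ncard := by
    rw [Set.ncard_def, Set.ncard_def, hJ'.encard_eq_encard hI]
  exact (Set.ncard_le_ncard hJJ' (hfin.subset hJ'.indep.subset_ground)).trans h1.le

private lemma mrk_indep (hfin : M.E.Finite) (hI : M.Indep I) : mrk M I = I.ncard :=
  basis_mrk_eq hfin hI.isBasis_self

private lemma mrk_closure_eq (hfin : M.E.Finite) (hS : S ⊆ M.E) :
    mrk M (M.closure S) = mrk M S := by
  obtain ⟨I, hI⟩ := M.exists_isBasis S hS
  rw [basis_mrk_eq hfin hI.isBasis_closure_right, basis_mrk_eq hfin hI]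

private lemma mrk_union_le (hfin : M.E.Finite) (S T : Set α) :
    mrk M (S ∪ T) ≤ mrk M S + mrk M T := by
  refine mrk_le fun I hI hIST => ?_
  have hsplit : I = (I ∩ S) ∪ (I ∩ T) := by
    rw [← inter_union_distrib_left, inter_eq_self_of_subset_left hIST]
  calc I.ncard = ((I ∩ S) ∪ (I ∩ T)).ncard := by rw [← hsplit]
    _ ≤ (I ∩ S).ncard + (I ∩ T).ncard := Set.ncard_union_le _ _
    _ ≤ mrk M S + mrk M T :=
        add_le_add (le_mrk hfin (hI.subset inter_subset_left) inter_subset_right)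
          (le_mrk hfin (hI.subset inter_subset_left) inter_subset_right)

private lemma flat_closure (M : Matroid α) (S : Set α) : M.IsFlat (M.closure S) := by
  rw [Matroid.closure_def, sInter_eq_iInter]
  haveI : Nonempty {F // F ∈ {F | M.IsFlat F ∧ S ∩ M.E ⊆ F}} :=
    ⟨⟨M.E, M.ground_isFlat, inter_subset_right⟩⟩
  exact Matroid.IsFlat.iInter fun F => F.2.1

private lemma flat_iff' : M.IsFlat F ↔ M.closure F = F ∧ F ⊆ M.E :=
  ⟨fun h => ⟨h.closure, h.subset_ground⟩, fun ⟨h1, _⟩ => h1 ▸ flat_closure M F⟩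

private lemma Flat.inter' (hF : M.IsFlat F) (hF' : M.IsFlat F') : M.IsFlat (F ∩ F') := by
  rw [flat_iff']
  refine ⟨subset_antisymm ?_ (M.subset_closure _ (inter_subset_left.trans hF.subset_ground)), 
    inter_subset_left.trans hF.subset_ground⟩
  exact subset_inter ((M.closure_subset_closure inter_subset_left).trans hF.closure.subset)
    ((M.closure_subset_closure inter_subset_right).trans hF'.closure.subset)

private lemma flat_of_restrict_flat (hX : M.IsFlat X) (hF : (M ↾ X).IsFlat F) :
    M.IsFlat F ∧ F ⊆ X := by
  have hFX : F ⊆ X := hF.subset_ground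
  have hFE : F ⊆ M.E := hFX.trans hX.subset_ground
  obtain ⟨I, hI⟩ := M.exists_isBasis F hFE
  have hIr : (M ↾ X).IsBasis I F :=
    (Matroid.isBasis_restrict_iff hX.subset_ground).2 ⟨hI, hFX⟩
  have hkey : M.closure F ∩ X ⊆ F := by
    rintro e ⟨heF, heX⟩
    rw [← hI.closure_eq_closure] at heF
    have h1 : M.IsBasis I (insert e I) := hI.indep.insert_isBasis_iff_mem_closure.2 heF
    have h2 : (M ↾ X).IsBasis I (insert e I) :=
      (Matroid.isBasis_restrict_iff hX.subset_ground).2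
        ⟨h1, insert_subset heX (hI.subset.trans hFX)⟩
    exact hF.subset_of_isBasis_of_isBasis hIr h2 (mem_insert e I)
  have hFeq : F = M.closure F ∩ X :=
    subset_antisymm (subset_inter (M.subset_closure F hFE) hFX) hkey
  exact ⟨hFeq ▸ Flat.inter' (flat_closure M F) hX, hFX⟩

private lemma flat_eq_of_mrk_le (hfin : M.E.Finite) (hF : M.IsFlat F) (hF' : M.IsFlat F')
    (hss : F ⊆ F') (hr : mrk M F' ≤ mrk M F) : F' = F := by
  obtain ⟨I, hI⟩ := M.exists_isBasis F hF.subset_ground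
  obtain ⟨J, hJ, hIJ⟩ := hI.indep.subset_isBasis_of_subset (hI.subset.trans hss) hF'.subset_ground
  have hIJcard : J.ncard ≤ I.ncard := by
    rw [← basis_mrk_eq hfin hI, ← basis_mrk_eq hfin hJ]; exact hr
  have hIJ' : I = J :=
    Set.eq_of_subset_of_ncard_le hIJ hIJcard (hfin.subset hJ.indep.subset_ground)
  rw [← hF'.closure, ← hJ.closure_eq_closure, ← hIJ', hI.closure_eq_closure, hF.closure]

private lemma flat_eq_closure_of_indep (hfin : M.E.Finite) (hZ : M.IsFlat Z) (hI : M.Indep I)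
    (hIZ : I ⊆ Z) (hcard : mrk M Z ≤ I.ncard) : Z = M.closure I := by
  obtain ⟨J, hJ, hIJ⟩ := hI.subset_isBasis_of_subset hIZ hZ.subset_ground
  have hIJ' : I = J :=
    Set.eq_of_subset_of_ncard_le hIJ (by rw [← basis_mrk_eq hfin hJ]; exact hcard)
      (hfin.subset hJ.indep.subset_ground)
  rw [hIJ', hJ.closure_eq_closure, hZ.closure]

end Aux

/-- Every modular flat of a round matroid is round. -/
theorem stmt3 (M : Matroid α) (hfin : M.E.Finite) (hround : Round M)
    {X : Set α} (hX : ModularFlat M X) :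
    Round (M ↾ X) := by
  rintro ⟨F₁, F₂, hF₁, hF₂, hne₁, hne₂, hunion⟩
  obtain ⟨hXflat, hmod⟩ := hX
  have hXE : X ⊆ M.E := hXflat.subset_ground
  rw [Matroid.restrict_ground_eq] at hunion hne₁ hne₂
  obtain ⟨hF₁M, hF₁X⟩ := flat_of_restrict_flat hXflat hF₁
  obtain ⟨hF₂M, hF₂X⟩ := flat_of_restrict_flat hXflat hF₂
  obtain ⟨IX, hIX⟩ := M.exists_isBasis X hXE
  obtain ⟨B, hB, hIXB⟩ :=
    hIX.indep.subset_isBasis_of_subset hIX.indep.subset_ground Subset.rfl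
  set B' : Set α := B \ IX with hB'def
  have hB'indep : M.Indep B' := hB.indep.subset diff_subset
  have hB'E : B' ⊆ M.E := hB'indep.subset_ground
  have hcardB : B'.ncard + IX.ncard = B.ncard :=
    Set.ncard_diff_add_ncard_of_subset hIXB (hfin.subset hB.indep.subset_ground)
  have rE : mrk M M.E = B.ncard := basis_mrk_eq hfin hB
  have rX : mrk M X = IX.ncard := basis_mrk_eq hfin hIX
  -- spanning lemma
  have hclXB' : M.closure (X ∪ B') = M.E := by
    refine subset_antisymm (M.closure_subset_ground _) ?_
    have hBsub : B ⊆ X ∪ B' := by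
      intro b hb
      by_cases hbI : b ∈ IX
      · exact Or.inl (hIX.subset hbI)
      · exact Or.inr ⟨hb, hbI⟩
    calc M.E = M.closure B := by rw [hB.closure_eq_closure, M.closure_ground]
      _ ⊆ M.closure (X ∪ B') := M.closure_subset_closure hBsub
  have hclE : ∀ S : Set α, X ∪ B' ⊆ S → S ⊆ M.E → M.closure S = M.E := by
    intro S h1 h2
    refine subset_antisymm (M.closure_subset_ground _) ?_
    rw [← hclXB']
    exact M.closure_subset_closure h1
  -- rank of X ∩ closure B' is zero
  have hXY0 : mrk M (X ∩ M.closure B') = 0 := by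
    have heq := hmod (M.closure B') (flat_closure M B')
    rw [Matroid.closure_union_closure_right_eq, hclXB'] at heq
    have rY : mrk M (M.closure B') = B'.ncard := by
      rw [mrk_closure_eq hfin hB'E, mrk_indep hfin hB'indep]
    omega
  -- the key property of G = closure (F ∪ B')
  have hGprop : ∀ F, M.IsFlat F → F ⊆ X → X ∩ M.closure (F ∪ B') = F := by
    intro F hF hFX
    have hFE : F ⊆ M.E := hFX.trans hXE
    have hFB'E : F ∪ B' ⊆ M.E := union_subset hFE hB'E
    have hGflat : M.IsFlat (M.closure (F ∪ B')) := flat_closure M _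
    have hB'G : B' ⊆ M.closure (F ∪ B') :=
      subset_union_right.trans (M.subset_closure _ hFB'E)
    have hclXG : M.closure (X ∪ M.closure (F ∪ B')) = M.E :=
      hclE _ (union_subset_union_right X hB'G)
        (union_subset hXE (M.closure_subset_ground _))
    have hrG : mrk M (M.closure (F ∪ B')) = mrk M (F ∪ B') := mrk_closure_eq hfin hFB'E
    have hrGle : mrk M (F ∪ B') ≤ mrk M F + B'.ncard := by
      have := mrk_union_le (M := M) hfin F B'
      rw [mrk_indep hfin hB'indep] at this
      exact this
    have heq := hmod _ hGflat
    rw [hclXG] at heq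
    have h1 : mrk M F ≤ mrk M (X ∩ M.closure (F ∪ B')) :=
      mrk_mono hfin (subset_inter hFX (subset_union_left.trans (M.subset_closure _ hFB'E)))
    have h2 : mrk M (X ∩ M.closure (F ∪ B')) ≤ mrk M F := by omega
    exact flat_eq_of_mrk_le hfin hF (Flat.inter' hXflat hGflat)
      (subset_inter hFX (subset_union_left.trans (M.subset_closure _ hFB'E))) h2
  -- the two flats are proper
  have hGne : ∀ F, M.IsFlat F → F ⊆ X → F ≠ X → M.closure (F ∪ B') ≠ M.E := by
    intro F hF hFX hne h
    have := hGprop F hF hFX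
    rw [h, inter_eq_self_of_subset_left hXE] at this
    exact hne this.symm
  -- coverage
  have hcover : ∀ e ∈ M.E, e ∈ M.closure (F₁ ∪ B') ∪ M.closure (F₂ ∪ B') := by
    intro e he
    by_cases heY : e ∈ M.closure B'
    · exact Or.inl (M.closure_subset_closure subset_union_right heY)
    have heB' : e ∉ B' := fun h => heY (M.subset_closure B' hB'E h)
    have hins : M.Indep (insert e B') := by
      rw [hB'indep.insert_indep_iff_of_notMem heB']; exact ⟨he, heY⟩
    have hinsE : insert e B' ⊆ M.E := hins.subset_ground
    have hZflat : M.IsFlat (M.closure (insert e B')) := flat_closure M _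
    have hrZ : mrk M (M.closure (insert e B')) = B'.ncard + 1 := by
      rw [mrk_closure_eq hfin hinsE, mrk_indep hfin hins,
        Set.ncard_insert_of_notMem heB' (hfin.subset hB'E)]
    have hB'Z : B' ⊆ M.closure (insert e B') :=
      (subset_insert e B').trans (M.subset_closure _ hinsE)
    have hclXZ : M.closure (X ∪ M.closure (insert e B')) = M.E :=
      hclE _ (union_subset_union_right X hB'Z)
        (union_subset hXE (M.closure_subset_ground _))
    have heq := hmod _ hZflat
    rw [hclXZ] at heq
    have hXZ1 : mrk M (X ∩ M.closure (insert e B')) = 1 := by omega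
    have hmem : mrk M (X ∩ M.closure (insert e B')) ∈
        {n | ∃ I, M.Indep I ∧ I ⊆ X ∩ M.closure (insert e B') ∧ I.ncard = n} :=
      Nat.sSup_mem (mrk_set_nonempty M _) (mrk_set_bdd hfin _)
    rw [hXZ1] at hmem
    obtain ⟨I, hIindep, hIXZ, hI1⟩ := hmem
    obtain ⟨x, rfl⟩ := Set.ncard_eq_one.1 hI1
    have hxX : x ∈ X := (hIXZ rfl).1
    have hxZ : x ∈ M.closure (insert e B') := (hIXZ rfl).2
    have hxY : x ∉ M.closure B' := by
      intro hx
      have h1 : ({x} : Set α).ncard ≤ mrk M (X ∩ M.closure B') :=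
        le_mrk hfin hIindep (subset_inter (singleton_subset_iff.2 hxX)
          (singleton_subset_iff.2 hx))
      rw [Set.ncard_singleton] at h1
      omega
    have hxB' : x ∉ B' := fun h => hxY (M.subset_closure B' hB'E h)
    have hxE : x ∈ M.E := hIindep.subset_ground rfl
    have hxins : M.Indep (insert x B') := by
      rw [hB'indep.insert_indep_iff_of_notMem hxB']; exact ⟨hxE, hxY⟩
    have hxsubZ : insert x B' ⊆ M.closure (insert e B') := insert_subset hxZ hB'Z
    have hZeq : M.closure (insert e B') = M.closure (insert x B') :=
      flat_eq_closure_of_indep hfin hZflat hxins hxsubZ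
        (by rw [hrZ, Set.ncard_insert_of_notMem hxB' (hfin.subset hB'E)])
    have heZ : e ∈ M.closure (insert x B') := by
      rw [← hZeq]; exact M.subset_closure _ hinsE (mem_insert e B')
    rcases (hunion ▸ hxX : x ∈ F₁ ∪ F₂) with hx1 | hx2
    · exact Or.inl (M.closure_subset_closure
        (insert_subset (Or.inl hx1) subset_union_right) heZ)
    · exact Or.inr (M.closure_subset_closure
        (insert_subset (Or.inl hx2) subset_union_right) heZ)
  exact hround ⟨M.closure (F₁ ∪ B'), M.closure (F₂ ∪ B'), flat_closure M _, flat_closure M _,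
    hGne F₁ hF₁M hF₁X hne₁, hGne F₂ hF₂M hF₂X hne₂,
    subset_antisymm (fun e he => hcover e he)
      (union_subset (M.closure_subset_ground _) (M.closure_subset_ground _))⟩

end Paper
end

section
/- Let M be a simple matroid, X a modular coatom of M, and e an element of the ground set not in X. Then χ(M, t) = (t - k) · χ(M|X, t), where k = |E \ X| is the number of elements outside X; in particular χ(M|X, t) divides χ(M, t). -/
open scoped Classical Matroid

namespace Paper

variable {α : Type*}

/-- Möbius function (measured from the bottom flat) on the lattice of flats of a matroid. -/
noncomputable def mob (M : Matroid α) [Fintype α] : Finset α → ℤ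
  | F =>
    if (F : Set α) = M.closure ∅ then 1
    else - ∑ G ∈ (Finset.univ.powerset.filter
        (fun G : Finset α => M.IsFlat ↑G ∧ (G : Set α) ⊂ (F : Set α))).attach,
        mob M G.1
termination_by F => F.card
decreasing_by
  · have hG := G.2
    simp only [Finset.mem_filter] at hG
    exact Finset.card_lt_card (Finset.coe_ssubset.mp hG.2.2)

/-- The characteristic polynomial `χ(M, t) = ∑_{F flat} μ(F) t^(r(M) - r(F))`. -/
noncomputable def charPoly (M : Matroid α) [Fintype α] : Polynomial ℤ :=
  ∑ F ∈ Finset.univ.powerset.filter (fun F : Finset α => M.IsFlat ↑F),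
    Polynomial.C (mob M F) * Polynomial.X ^ (mrk M M.E - mrk M ↑F)


section Aux
open Set

variable {M : Matroid α} {X Y F G : Set α} {I J : Set α} {e f : α}

section RankLemmas
variable [Fintype α] {M : Matroid α} {X Y F G : Set α} {I J : Set α} {e f : α}

lemma mrk_eq_of_basis' (hI : M.IsBasis' I X) : mrk M X = I.ncard := by
  have hmax : IsGreatest {n | ∃ J, M.Indep J ∧ J ⊆ X ∧ J.ncard = n} I.ncard := by
    constructor
    · exact ⟨I, hI.indep, hI.subset, rfl⟩
    · rintro n ⟨J, hJ, hJX, rfl⟩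
      obtain ⟨I', hI', hJI'⟩ := hJ.subset_isBasis'_of_subset hJX
      have hcard : I'.encard = I.encard := hI'.encard_eq_encard hI
      calc J.ncard ≤ I'.ncard := Set.ncard_le_ncard hJI' I'.toFinite
        _ = I.ncard := by rw [Set.ncard_def, hcard, ← Set.ncard_def]
  exact hmax.csSup_eq

lemma mrk_eq_of_basis (hI : M.IsBasis I X) : mrk M X = I.ncard :=
  mrk_eq_of_basis' hI.isBasis'

lemma Indep.mrk_eq (hI : M.Indep I) : mrk M I = I.ncard :=
  mrk_eq_of_basis hI.isBasis_self

lemma mrk_mono_s19 (h : X ⊆ Y) : mrk M X ≤ mrk M Y := by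
  obtain ⟨I, hI⟩ := M.exists_isBasis' X
  obtain ⟨J, hJ, hIJ⟩ := hI.indep.subset_isBasis'_of_subset (hI.subset.trans h)
  rw [mrk_eq_of_basis' hI, mrk_eq_of_basis' hJ]
  exact Set.ncard_le_ncard hIJ J.toFinite

lemma mrk_closure_eq_s19 (M : Matroid α) (X : Set α) : mrk M (M.closure X) = mrk M X := by
  obtain ⟨I, hI⟩ := M.exists_isBasis' X
  rw [mrk_eq_of_basis' hI, mrk_eq_of_basis hI.isBasis_closure_right]

lemma closure_flat (M : Matroid α) (X : Set α) : M.IsFlat (M.closure X) := by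
  rw [Matroid.closure_def]
  have hne : Nonempty {F // M.IsFlat F ∧ X ∩ M.E ⊆ F} :=
    ⟨⟨M.E, M.ground_isFlat, inter_subset_right⟩⟩
  rw [sInter_eq_iInter]
  have hne : Nonempty ↑{F | M.IsFlat F ∧ X ∩ M.E ⊆ F} := ⟨⟨M.E, M.ground_isFlat, inter_subset_right⟩⟩
  exact Matroid.IsFlat.iInter fun F => F.2.1

lemma flat_inter (hF : M.IsFlat F) (hG : M.IsFlat G) : M.IsFlat (F ∩ G) := by
  have h1 : M.closure (F ∩ G) = F ∩ G := by
    apply subset_antisymm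
    · exact subset_inter
        ((M.closure_subset_closure inter_subset_left).trans hF.closure.subset)
        ((M.closure_subset_closure inter_subset_right).trans hG.closure.subset)
    · exact M.subset_closure _ (inter_subset_left.trans hF.subset_ground)
  rw [← h1]; exact closure_flat M _

/-- flats with equal rank and containment are equal -/
lemma flat_eq_of_subset_of_mrk_le (hF : M.IsFlat F) (hG : M.IsFlat G) (hFG : F ⊆ G)
    (hr : mrk M G ≤ mrk M F) : F = G := by
  obtain ⟨I, hI⟩ := M.exists_isBasis F hF.subset_ground
  obtain ⟨J, hJ, hIJ⟩ := hI.indep.subset_isBasis_of_subset (hI.subset.trans hFG) hG.subset_ground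
  have hIJcard : J.ncard ≤ I.ncard := by
    rw [← mrk_eq_of_basis hI, ← mrk_eq_of_basis hJ]; exact hr
  have hIJ' : I = J := Set.eq_of_subset_of_ncard_le hIJ hIJcard J.toFinite
  have : G ⊆ M.closure I := by rw [hIJ']; exact hJ.subset_closure
  exact hFG.antisymm (this.trans (by rw [← hF.closure]; exact M.closure_subset_closure hI.subset))

lemma mrk_lt_of_flat_ssubset (hF : M.IsFlat F) (hG : M.IsFlat G) (hFG : F ⊂ G) :
    mrk M F < mrk M G := by
  rcases lt_or_ge (mrk M F) (mrk M G) with h | h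
  · exact h
  · exact absurd (flat_eq_of_subset_of_mrk_le hF hG hFG.subset h) hFG.ne

lemma flat_eq_ground_of_mrk_ge (hF : M.IsFlat F) (h : mrk M M.E ≤ mrk M F) : F = M.E :=
  flat_eq_of_subset_of_mrk_le hF M.ground_isFlat hF.subset_ground h

/-- rank of closure of insert -/
lemma mrk_insert_of_not_mem_closure (hG : M.IsFlat G) (he : e ∈ M.E) (heG : e ∉ G) :
    mrk M (M.closure (insert e G)) = mrk M G + 1 := by
  obtain ⟨I, hI⟩ := M.exists_isBasis G hG.subset_ground
  have heI : e ∉ I := fun h => heG (hI.subset h)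
  have hcl : M.closure I = G := by rw [hI.closure_eq_closure, hG.closure]
  have hind : M.Indep (insert e I) := by
    rw [hI.indep.insert_indep_iff_of_notMem heI, hcl]; exact ⟨he, heG⟩
  have hbas : M.IsBasis (insert e I) (insert e G) := by
    apply hind.isBasis_of_subset_of_subset_closure (insert_subset_insert hI.subset)
    have h1 : e ∈ M.closure (insert e I) :=
      M.mem_closure_of_mem (mem_insert _ _) (insert_subset he hI.indep.subset_ground)
    have h2 : G ⊆ M.closure (insert e I) := by
      rw [← hcl]
      exact M.closure_subset_closure (subset_insert _ _)
    exact insert_subset h1 h2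
  rw [mrk_closure_eq_s19, mrk_eq_of_basis hbas, mrk_eq_of_basis hI,
    Set.ncard_insert_of_notMem heI I.toFinite]


end RankLemmas

section StructLemmas
variable [Fintype α]
/-! ### Simplicity -/

lemma SimpleM.closure_empty (hs : SimpleM M) : M.closure (∅ : Set α) = ∅ := by
  ext f
  simp only [mem_empty_iff_false, iff_false]
  intro hf
  have hfE : f ∈ M.E := M.mem_ground_of_mem_closure hf
  have := (M.empty_indep.mem_closure_iff' (x := f)).mp hf
  have hind : M.Indep {f} := hs {f} (by simpa) (by simp [Set.ncard_singleton])
  simpa using this.2 (by simpa using hind)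

lemma SimpleM.flat_singleton (hs : SimpleM M) (hf : f ∈ M.E) : M.closure {f} = {f} := by
  have hind : M.Indep {f} := hs {f} (by simpa) (by simp [Set.ncard_singleton])
  apply subset_antisymm _ (M.subset_closure _ (by simpa))
  intro g hg
  have hgE : g ∈ M.E := M.mem_ground_of_mem_closure hg
  by_contra hgf
  have h2 : M.Indep {g, f} := by
    apply hs _ (by rw [Set.insert_subset_iff]; exact ⟨hgE, by simpa⟩)
    exact (Set.ncard_insert_le _ _).trans (by simp [Set.ncard_singleton])
  have := (hind.mem_closure_iff' (x := g)).mp hg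
  exact hgf (by simpa using this.2 h2)

lemma SimpleM.mrk_singleton (hs : SimpleM M) (hf : f ∈ M.E) : mrk M {f} = 1 := by
  have hind : M.Indep {f} := hs {f} (by simpa) (by simp [Set.ncard_singleton])
  rw [Indep.mrk_eq hind, Set.ncard_singleton]

/-- a rank-one flat in a simple matroid is a singleton -/
lemma SimpleM.flat_rank_one (hs : SimpleM M) (hF : M.IsFlat F) (hr : mrk M F = 1) :
    ∃ f, F = {f} := by
  obtain ⟨I, hI⟩ := M.exists_isBasis F hF.subset_ground
  have hcard : I.ncard = 1 := by rw [← mrk_eq_of_basis hI, hr]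
  obtain ⟨f, rfl⟩ := Set.ncard_eq_one.mp hcard
  refine ⟨f, ?_⟩
  have : M.closure {f} = F := by rw [hI.closure_eq_closure, hF.closure]
  rw [← this, hs.flat_singleton (hI.indep.subset_ground rfl)]

/-! ### Modular coatom structure -/

variable (hs : SimpleM M) (hmod : ModularFlat M X) (hcoatom : mrk M X + 1 = mrk M M.E)

section
include hmod hcoatom

lemma flat_closure_union_eq_ground (hF : M.IsFlat F) (hFX : ¬ F ⊆ X) :
    M.closure (X ∪ F) = M.E := by
  obtain ⟨f, hfF, hfX⟩ := Set.not_subset.mp hFX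
  have hXE : X ⊆ M.E := hmod.1.subset_ground
  have hsub : X ∪ F ⊆ M.E := union_subset hXE hF.subset_ground
  have hXcl : X ⊆ M.closure (X ∪ F) := (subset_union_left).trans (M.subset_closure _ hsub)
  have hssub : X ⊂ M.closure (X ∪ F) :=
    hXcl.ssubset_of_ne (fun h => hfX (h ▸ (M.subset_closure _ hsub (Or.inr hfF))))
  have hlt : mrk M X < mrk M (M.closure (X ∪ F)) :=
    mrk_lt_of_flat_ssubset hmod.1 (closure_flat M _) hssub
  exact flat_eq_ground_of_mrk_ge (closure_flat M _) (by omega)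

/-- modularity: for a flat not inside X, rank drops by one when intersecting with X -/
lemma mrk_inter_coatom (hF : M.IsFlat F) (hFX : ¬ F ⊆ X) :
    mrk M F = mrk M (X ∩ F) + 1 := by
  have h := hmod.2 F hF
  rw [flat_closure_union_eq_ground hmod hcoatom hF hFX] at h
  omega

/-- the key closure computation: for a flat G ⊆ X and e outside X,
`cl (insert e G)` is a flat meeting X exactly in G. -/
lemma closure_insert_inter (hG : M.IsFlat G) (hGX : G ⊆ X) (he : e ∈ M.E) (heX : e ∉ X) :
    X ∩ M.closure (insert e G) = G ∧
    mrk M (M.closure (insert e G)) = mrk M G + 1 ∧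
    ¬ M.closure (insert e G) ⊆ X ∧ e ∈ M.closure (insert e G) := by
  have heG : e ∉ G := fun h => heX (hGX h)
  have hr : mrk M (M.closure (insert e G)) = mrk M G + 1 :=
    mrk_insert_of_not_mem_closure hG he heG
  have hins : insert e G ⊆ M.E := insert_subset he hG.subset_ground
  have hecl : e ∈ M.closure (insert e G) := M.subset_closure _ hins (mem_insert _ _)
  have hnsub : ¬ M.closure (insert e G) ⊆ X := fun h => heX (h hecl)
  refine ⟨?_, hr, hnsub, hecl⟩
  have h9 := mrk_inter_coatom hmod hcoatom (closure_flat M (insert e G)) hnsub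
  have hGsub : G ⊆ X ∩ M.closure (insert e G) :=
    subset_inter hGX ((subset_insert _ _).trans (M.subset_closure _ hins))
  exact (flat_eq_of_subset_of_mrk_le hG (flat_inter hmod.1 (closure_flat M _)) hGsub
    (by omega)).symm

/-- uniqueness: a flat F ⊄ X with F ∩ X = G containing e equals cl(insert e G) -/
lemma flat_eq_closure_insert (hF : M.IsFlat F) (hFX : ¬ F ⊆ X) (hFG : X ∩ F = G)
    (heF : e ∈ F) (heX : e ∉ X) : F = M.closure (insert e G) := by
  have hGX : G ⊆ X := hFG ▸ inter_subset_left
  have hGflat : M.IsFlat G := hFG ▸ flat_inter hmod.1 hF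
  have heE : e ∈ M.E := hF.subset_ground heF
  obtain ⟨-, hr, -, -⟩ := closure_insert_inter hmod hcoatom hGflat hGX heE heX
  have hsub : M.closure (insert e G) ⊆ F := by
    rw [← hF.closure]
    exact M.closure_subset_closure (insert_subset heF (hFG ▸ inter_subset_right))
  have hrF : mrk M F = mrk M G + 1 := by
    rw [mrk_inter_coatom hmod hcoatom hF hFX, hFG]
  exact (flat_eq_of_subset_of_mrk_le (closure_flat M _) hF hsub (by omega)).symm

end

/-- the mod-coatom fiber: atoms case needs simplicity. If F is a flat with F ⊄ X and
X ∩ F = cl ∅ = ∅, then F is a singleton outside X. -/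
lemma fiber_bottom (hs : SimpleM M) (hmod : ModularFlat M X) (hcoatom : mrk M X + 1 = mrk M M.E)
    (hF : M.IsFlat F) (hFX : ¬ F ⊆ X) (hFG : X ∩ F = ∅) : ∃ f, F = {f} ∧ f ∉ X := by
  have hr : mrk M F = 1 := by
    have h := mrk_inter_coatom hmod hcoatom hF hFX
    rw [hFG] at h
    have h0 : mrk M (∅ : Set α) = 0 := by
      rw [Indep.mrk_eq M.empty_indep, Set.ncard_empty]
    omega
  obtain ⟨f, rfl⟩ := hs.flat_rank_one hF hr
  exact ⟨f, rfl, fun hfX => hFX (by simpa using hfX)⟩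


end StructLemmas

section RestrLemmas
variable [Fintype α]
lemma mrk_restrict (hYX : Y ⊆ X) : mrk (M ↾ X) Y = mrk M Y := by
  unfold mrk
  congr 1
  ext n
  constructor
  · rintro ⟨I, hI, hIY, rfl⟩
    exact ⟨I, (Matroid.restrict_indep_iff.mp hI).1, hIY, rfl⟩
  · rintro ⟨I, hI, hIY, rfl⟩
    exact ⟨I, Matroid.restrict_indep_iff.mpr ⟨hI, hIY.trans hYX⟩, hIY, rfl⟩

lemma restrict_closure_eq_of_subset (hX : M.IsFlat X) (hYX : Y ⊆ X) :
    (M ↾ X).closure Y = M.closure Y := by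
  obtain ⟨I, hI⟩ := M.exists_isBasis' Y
  have hIY : I ⊆ Y := hI.subset
  have hIX : I ⊆ X := hIY.trans hYX
  have hI' : (M ↾ X).IsBasis' I Y := by
    rw [Matroid.isBasis'_restrict_iff]
    refine ⟨by rwa [inter_eq_self_of_subset_left hYX], hIX⟩
  rw [← hI.closure_eq_closure, ← hI'.closure_eq_closure]
  have hIind : M.Indep I := hI.indep
  have hIind' : (M ↾ X).Indep I := Matroid.restrict_indep_iff.mpr ⟨hIind, hIX⟩
  have hclX : M.closure I ⊆ X := by
    rw [← hX.closure]; exact M.closure_subset_closure hIX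
  ext g
  rw [hIind.mem_closure_iff', hIind'.mem_closure_iff', Matroid.restrict_ground_eq,
    Matroid.restrict_indep_iff]
  constructor
  · rintro ⟨hgX, h⟩
    exact ⟨hX.subset_ground hgX, fun hind => h ⟨hind, insert_subset hgX hIX⟩⟩
  · rintro ⟨hgE, h⟩
    by_cases hgI : g ∈ I
    · exact ⟨hIX hgI, fun _ => hgI⟩
    constructor
    · by_contra hgX
      exact hgX (hclX ((hIind.mem_closure_iff').mpr ⟨hgE, h⟩))
    · exact fun hind => h hind.1

lemma restrict_flat_iff (hX : M.IsFlat X) :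
    (M ↾ X).IsFlat F ↔ M.IsFlat F ∧ F ⊆ X := by
  constructor
  · intro hF
    have hFX : F ⊆ X := hF.subset_ground
    have h1 : (M ↾ X).closure F = F := hF.closure
    rw [restrict_closure_eq_of_subset hX hFX] at h1
    refine ⟨?_, hFX⟩
    rw [← h1]
    exact closure_flat M F
  · rintro ⟨hF, hFX⟩
    have h1 : (M ↾ X).closure F = F := by
      rw [restrict_closure_eq_of_subset hX hFX, hF.closure]
    rw [← h1]
    exact closure_flat (M ↾ X) F

lemma SimpleM.restrict (hs : SimpleM M) (hXE : X ⊆ M.E) : SimpleM (M ↾ X) := by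
  intro Y hY hY2
  rw [Matroid.restrict_ground_eq] at hY
  exact Matroid.restrict_indep_iff.mpr ⟨hs Y (hY.trans hXE) hY2, hY⟩


end RestrLemmas

section MobLemmas
variable [Fintype α]
/-- the collection of flats of `M`, as a finset of finsets -/
noncomputable def flats (M : Matroid α) : Finset (Finset α) :=
  Finset.univ.powerset.filter (fun F : Finset α => M.IsFlat ↑F)

lemma mem_flats (M : Matroid α) {F : Finset α} : F ∈ flats M ↔ M.IsFlat ↑F := by
  simp [flats]

lemma mob_def (M : Matroid α) (F : Finset α) :
    mob M F = if (F : Set α) = M.closure ∅ then 1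
      else - ∑ G ∈ (flats M).filter (fun G : Finset α => (G : Set α) ⊂ (F : Set α)), mob M G := by
  rw [mob]
  congr 1
  rw [← Finset.sum_attach ((flats M).filter (fun G : Finset α => (G : Set α) ⊂ (F : Set α)))
    (fun G => mob M G)]
  congr 1
  · unfold flats
    rw [Finset.filter_filter]



lemma sum_mob_subsets (hbot : M.closure ∅ = ∅) {F : Finset α} (hF : M.IsFlat ↑F) :
    ∑ G ∈ (flats M).filter (fun G : Finset α => (G : Set α) ⊆ (F : Set α)), mob M G =
      if F = (∅ : Finset α) then 1 else 0 := by
  by_cases hFe : F = (∅ : Finset α)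
  · subst hFe
    rw [if_pos rfl]
    have hset : (flats M).filter (fun G : Finset α => (G : Set α) ⊆ ((∅ : Finset α) : Set α)) =
        {(∅ : Finset α)} := by
      ext G
      simp only [Finset.mem_filter, mem_flats, Finset.mem_singleton, Finset.coe_empty,
        Set.subset_empty_iff, Finset.coe_eq_empty]
      exact ⟨fun h => h.2, fun h => ⟨by rw [h]; simpa using hF, h⟩⟩
    rw [hset, Finset.sum_singleton, mob_def]
    simp [hbot]
  · rw [if_neg hFe]
    have hsplit : (flats M).filter (fun G : Finset α => (G : Set α) ⊆ (F : Set α)) =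
        insert F ((flats M).filter (fun G : Finset α => (G : Set α) ⊂ (F : Set α))) := by
      ext G
      simp only [Finset.mem_filter, mem_flats, Finset.mem_insert]
      constructor
      · rintro ⟨hG, hGF⟩
        rcases eq_or_ssubset_of_subset hGF with h | h
        · exact Or.inl (Finset.coe_injective h)
        · exact Or.inr ⟨hG, h⟩
      · rintro (rfl | ⟨hG, hGF⟩)
        · exact ⟨hF, subset_rfl⟩
        · exact ⟨hG, hGF.subset⟩
    have hnotmem : F ∉ (flats M).filter (fun G : Finset α => (G : Set α) ⊂ (F : Set α)) := by
      simp only [Finset.mem_filter]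
      rintro ⟨-, h⟩
      exact h.ne rfl
    rw [hsplit, Finset.sum_insert hnotmem, mob_def,
      if_neg (by rw [hbot]; simpa using hFe)]
    ring


lemma mob_restrict (hX : M.IsFlat X) (hbot : M.closure ∅ = ∅)
    (hbot' : (M ↾ X).closure ∅ = ∅) :
    ∀ F : Finset α, (F : Set α) ⊆ X → mob (M ↾ X) F = mob M F := by
  intro F
  induction F using Finset.strongInduction with
  | _ F ih =>
    intro hFX
    rw [mob_def, mob_def, hbot, hbot']
    by_cases hFe : (F : Set α) = (∅ : Set α)
    · rw [if_pos hFe, if_pos hFe]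
    · rw [if_neg hFe, if_neg hFe]
      congr 1
      have hset : (flats (M ↾ X)).filter (fun G : Finset α => (G : Set α) ⊂ (F : Set α)) =
          (flats M).filter (fun G : Finset α => (G : Set α) ⊂ (F : Set α)) := by
        ext G
        simp only [Finset.mem_filter, mem_flats, restrict_flat_iff hX]
        constructor
        · rintro ⟨⟨h1, _⟩, h3⟩; exact ⟨h1, h3⟩
        · rintro ⟨h1, h3⟩; exact ⟨⟨h1, h3.subset.trans hFX⟩, h3⟩
      rw [hset]
      apply Finset.sum_congr rfl
      intro G hG
      simp only [Finset.mem_filter] at hG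
      exact ih G (Finset.coe_ssubset.mp hG.2) (hG.2.subset.trans hFX)

/-- counting: the sets `F' \ X`, for `F'` ranging over flats inside `F` not contained in `X`
whose intersection with `X` is a fixed flat `g`, partition `F \ X`. -/
lemma fiber_count (hmod : ModularFlat M X) (hcoatom : mrk M X + 1 = mrk M M.E)
    {F g : Finset α} (hF : M.IsFlat ↑F) (hFX : ¬ (F : Set α) ⊆ X) (hg : M.IsFlat ↑g)
    (hgsub : (g : Set α) ⊆ X ∩ ↑F) :
    ∑ G' ∈ (flats M).filter
        (fun G' : Finset α => (G' : Set α) ⊆ ↑F ∧ ¬ (G' : Set α) ⊆ X ∧ X ∩ ↑G' = ↑g),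
      ((G' : Finset α) \ X.toFinset).card = (F \ X.toFinset).card := by
  classical
  set fib := (flats M).filter
      (fun G' : Finset α => (G' : Set α) ⊆ ↑F ∧ ¬ (G' : Set α) ⊆ X ∧ X ∩ ↑G' = ↑g) with hfib
  have step1 : ∀ G' ∈ fib, (G' \ X.toFinset).card =
      ((F \ X.toFinset).filter (fun e => e ∈ G')).card := by
    intro G' hG'
    simp only [hfib, Finset.mem_filter] at hG'
    have hsub : G' ⊆ F := Finset.coe_subset.mp hG'.2.1
    congr 1
    ext x
    simp only [Finset.mem_sdiff, Finset.mem_filter, Set.mem_toFinset]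
    exact ⟨fun h => ⟨⟨hsub h.1, h.2⟩, h.1⟩, fun h => ⟨h.2, h.1.2⟩⟩
  rw [Finset.sum_congr rfl step1]
  have step2 : ∀ G' ∈ fib, ((F \ X.toFinset).filter (fun e => e ∈ G')).card =
      ∑ x ∈ F \ X.toFinset, if x ∈ G' then 1 else 0 := fun G' _ => Finset.card_filter _ _
  rw [Finset.sum_congr rfl step2, Finset.sum_comm]
  have step3 : ∀ x ∈ F \ X.toFinset, (∑ G' ∈ fib, if x ∈ G' then 1 else 0) = 1 := by
    intro x hx
    rw [← Finset.card_filter]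
    have hxF : x ∈ (F : Set α) := by
      simp only [Finset.mem_sdiff] at hx; exact_mod_cast hx.1
    have hxX : x ∉ X := by
      simp only [Finset.mem_sdiff, Set.mem_toFinset] at hx; exact hx.2
    have hxE : x ∈ M.E := hF.subset_ground hxF
    have hgX : (g : Set α) ⊆ X := hgsub.trans inter_subset_left
    obtain ⟨hcap, hrk, hnsub, hmem⟩ := closure_insert_inter hmod hcoatom hg hgX hxE hxX
    have hsingle : fib.filter (fun G' => x ∈ G') =
        {(M.closure (insert x ↑g)).toFinset} := by
      ext G'
      simp only [Finset.mem_filter, hfib, mem_flats, Finset.mem_singleton]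
      constructor
      · rintro ⟨⟨hG'flat, hG'F, hG'X, hG'g⟩, hxG'⟩
        have := flat_eq_closure_insert hmod hcoatom hG'flat hG'X hG'g
          (show x ∈ (G' : Set α) by exact_mod_cast hxG') hxX
        apply Finset.coe_injective
        rw [Set.coe_toFinset, ← this]
      · rintro rfl
        have hclF : M.closure (insert x ↑g) ⊆ ↑F := by
          rw [← hF.closure]
          exact M.closure_subset_closure
            (insert_subset hxF (hgsub.trans inter_subset_right))
        refine ⟨⟨?_, ?_, ?_, ?_⟩, ?_⟩
        · rw [Set.coe_toFinset]; exact closure_flat M _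
        · rw [Set.coe_toFinset]; exact hclF
        · rw [Set.coe_toFinset]; exact hnsub
        · rw [Set.coe_toFinset]; exact hcap
        · rw [Set.mem_toFinset]; exact hmem
    rw [hsingle, Finset.card_singleton]
  rw [Finset.sum_congr rfl step3, Finset.sum_const, smul_eq_mul, mul_one]



lemma mob_fiber (hs : SimpleM M) (hmod : ModularFlat M X)
    (hcoatom : mrk M X + 1 = mrk M M.E) :
    ∀ F : Finset α, M.IsFlat ↑F → ¬ ((F : Set α) ⊆ X) →
      mob M F = -(((F \ X.toFinset).card : ℤ)) * mob M (X.toFinset ∩ F) := by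
  intro F
  induction F using Finset.strongInduction with
  | _ F ih =>
    intro hF hFX
    have hbot : M.closure ∅ = ∅ := hs.closure_empty
    set G : Finset α := X.toFinset ∩ F with hGdef
    have hGcoe : (G : Set α) = X ∩ (F : Set α) := by
      simp [hGdef, Finset.coe_inter, Set.coe_toFinset]
    have hGflat : M.IsFlat (G : Set α) := by rw [hGcoe]; exact flat_inter hmod.1 hF
    have hGX : (G : Set α) ⊆ X := by rw [hGcoe]; exact inter_subset_left
    have hGssub : (G : Set α) ⊂ (F : Set α) := by
      rw [hGcoe]
      exact inter_subset_right.ssubset_of_ne (fun h => hFX (h ▸ inter_subset_left))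
    have hrF : mrk M ↑F = mrk M ↑G + 1 := by
      rw [hGcoe]; exact mrk_inter_coatom hmod hcoatom hF hFX
    have hF0 : (F : Set α) ≠ M.closure ∅ := by
      rw [hbot]; intro h; exact hFX (by rw [h]; exact empty_subset X)
    rw [mob_def, if_neg hF0]
    rw [← Finset.sum_filter_add_sum_filter_not
      ((flats M).filter (fun G' : Finset α => (G' : Set α) ⊂ (F : Set α)))
      (fun G' : Finset α => (G' : Set α) ⊆ X) (mob M)]
    -- the part inside X
    have hS1 : (((flats M).filter (fun G' : Finset α => (G' : Set α) ⊂ (F : Set α))).filter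
        (fun G' : Finset α => (G' : Set α) ⊆ X)) =
        (flats M).filter (fun G' : Finset α => (G' : Set α) ⊆ (G : Set α)) := by
      ext G'
      simp only [Finset.mem_filter, mem_flats, and_assoc]
      constructor
      · rintro ⟨h1, h2, h3⟩
        exact ⟨h1, by rw [hGcoe]; exact subset_inter h3 h2.subset⟩
      · rintro ⟨h1, h2⟩
        refine ⟨h1, lt_of_le_of_lt h2 hGssub, h2.trans hGX⟩
    have hS1val : ∑ G' ∈ (((flats M).filter
          (fun G' : Finset α => (G' : Set α) ⊂ (F : Set α))).filter
          (fun G' : Finset α => (G' : Set α) ⊆ X)), mob M G' =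
        if G = (∅ : Finset α) then 1 else 0 := by
      rw [hS1]; exact sum_mob_subsets hbot hGflat
    -- the part outside X
    have hS2filter : (((flats M).filter
          (fun G' : Finset α => (G' : Set α) ⊂ (F : Set α))).filter
          (fun G' : Finset α => ¬ (G' : Set α) ⊆ X)) =
        (flats M).filter
          (fun G' : Finset α => (G' : Set α) ⊂ (F : Set α) ∧ ¬ (G' : Set α) ⊆ X) := by
      rw [Finset.filter_filter]
    have hmaps : ∀ G' ∈ (flats M).filter
          (fun G' : Finset α => (G' : Set α) ⊂ (F : Set α) ∧ ¬ (G' : Set α) ⊆ X),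
        X.toFinset ∩ G' ∈ (flats M).filter
          (fun g : Finset α => (g : Set α) ⊂ (G : Set α)) := by
      intro G' hG'
      simp only [Finset.mem_filter, mem_flats] at hG' ⊢
      obtain ⟨hG'flat, hG'F, hG'X⟩ := hG'
      have hcoe : ((X.toFinset ∩ G' : Finset α) : Set α) = X ∩ (G' : Set α) := by
        simp [Finset.coe_inter, Set.coe_toFinset]
      have hflat : M.IsFlat (X ∩ (G' : Set α)) := flat_inter hmod.1 hG'flat
      have hsub : X ∩ (G' : Set α) ⊆ (G : Set α) := by
        rw [hGcoe]; exact inter_subset_inter_right X hG'F.subset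
      have hrG' : mrk M ↑G' = mrk M (X ∩ ↑G') + 1 :=
        mrk_inter_coatom hmod hcoatom hG'flat hG'X
      have hlt : mrk M ↑G' < mrk M ↑F := mrk_lt_of_flat_ssubset hG'flat hF hG'F
      refine ⟨by rw [hcoe]; exact hflat, ?_⟩
      rw [hcoe]
      refine hsub.ssubset_of_ne (fun h => ?_)
      have : mrk M (X ∩ (G' : Set α)) = mrk M (G : Set α) := by rw [h]
      omega
    have hS2val : ∑ G' ∈ (((flats M).filter
          (fun G' : Finset α => (G' : Set α) ⊂ (F : Set α))).filter
          (fun G' : Finset α => ¬ (G' : Set α) ⊆ X)), mob M G' =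
        -(((F \ X.toFinset).card : ℤ)) *
          ∑ g ∈ (flats M).filter (fun g : Finset α => (g : Set α) ⊂ (G : Set α)), mob M g := by
      rw [hS2filter]
      rw [← Finset.sum_fiberwise_of_maps_to hmaps (mob M)]
      rw [Finset.mul_sum]
      apply Finset.sum_congr rfl
      intro g hg
      simp only [Finset.mem_filter, mem_flats] at hg
      obtain ⟨hgflat, hgG⟩ := hg
      have hgsub : (g : Set α) ⊆ X ∩ (F : Set α) := by
        rw [← hGcoe]; exact hgG.subset
      -- identify the two fibers
      have hfibeq : ((flats M).filter
            (fun G' : Finset α => (G' : Set α) ⊂ (F : Set α) ∧ ¬ (G' : Set α) ⊆ X)).filter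
            (fun G' : Finset α => X.toFinset ∩ G' = g) =
          (flats M).filter (fun G' : Finset α =>
            (G' : Set α) ⊆ ↑F ∧ ¬ (G' : Set α) ⊆ X ∧ X ∩ ↑G' = ↑g) := by
        ext G'
        simp only [Finset.mem_filter, mem_flats, and_assoc]
        have hcoe : ((X.toFinset ∩ G' : Finset α) : Set α) = X ∩ (G' : Set α) := by
          simp [Finset.coe_inter, Set.coe_toFinset]
        constructor
        · rintro ⟨h1, h2, h3, h4⟩
          refine ⟨h1, h2.subset, h3, ?_⟩
          rw [← hcoe, h4]
        · rintro ⟨h1, h2, h3, h4⟩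
          have hne : G' ≠ F := by
            rintro rfl
            rw [← hGcoe] at h4
            exact hgG.ne h4.symm
          refine ⟨h1, h2.ssubset_of_ne (fun hc => hne (Finset.coe_injective hc)), h3, ?_⟩
          apply Finset.coe_injective
          rw [hcoe, h4]
      have hcount : ∑ G' ∈ ((flats M).filter (fun G' : Finset α =>
            (G' : Set α) ⊆ ↑F ∧ ¬ (G' : Set α) ⊆ X ∧ X ∩ ↑G' = ↑g)),
          ((G' \ X.toFinset).card) = (F \ X.toFinset).card :=
        fiber_count hmod hcoatom hF hFX hgflat hgsub
      rw [hfibeq]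
      -- rewrite each mob via the induction hypothesis
      have hterm : ∀ G' ∈ (flats M).filter (fun G' : Finset α =>
            (G' : Set α) ⊆ ↑F ∧ ¬ (G' : Set α) ⊆ X ∧ X ∩ ↑G' = ↑g),
          mob M G' = -(((G' \ X.toFinset).card : ℤ)) * mob M g := by
        intro G' hG'
        simp only [Finset.mem_filter, mem_flats] at hG'
        obtain ⟨h1, h2, h3, h4⟩ := hG'
        have hne : G' ≠ F := by
          rintro rfl
          rw [← hGcoe] at h4
          exact hgG.ne h4.symm
        have hssub : G' ⊂ F :=
          (Finset.coe_subset.mp h2).ssubset_of_ne hne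
        have := ih G' hssub h1 h3
        rw [this]
        congr 2
        apply Finset.coe_injective
        rw [Finset.coe_inter, Set.coe_toFinset, h4]
      rw [Finset.sum_congr rfl hterm, ← Finset.sum_mul]
      congr 1
      rw [← hcount]
      push_cast
      rw [Finset.sum_neg_distrib]
    rw [hS1val, hS2val]
    by_cases hGe : G = (∅ : Finset α)
    · -- bottom fiber: F is a singleton outside X
      have hXF : X ∩ (F : Set α) = ∅ := by
        rw [← hGcoe, hGe, Finset.coe_empty]
      obtain ⟨f, hFf, hfX⟩ := fiber_bottom hs hmod hcoatom hF hFX hXF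
      have hFfin : F = ({f} : Finset α) := by
        apply Finset.coe_injective
        rw [hFf, Finset.coe_singleton]
      have hcard : (F \ X.toFinset).card = 1 := by
        rw [hFfin]
        have : ({f} : Finset α) \ X.toFinset = {f} := by
          ext x
          simp only [Finset.mem_sdiff, Finset.mem_singleton, Set.mem_toFinset]
          exact ⟨fun h => h.1, fun h => ⟨h, h ▸ hfX⟩⟩
        rw [this, Finset.card_singleton]
      have hT : ∑ g ∈ (flats M).filter (fun g : Finset α => (g : Set α) ⊂ (G : Set α)),
          mob M g = 0 := by
        have : (flats M).filter (fun g : Finset α => (g : Set α) ⊂ (G : Set α)) = ∅ := by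
          apply Finset.filter_false_of_mem
          intro g _
          rw [hGe, Finset.coe_empty]
          exact fun h => absurd h.subset (by simpa using h.ne)
        rw [this, Finset.sum_empty]
      have hmobG : mob M G = 1 := by
        rw [mob_def, if_pos (by rw [hGe, Finset.coe_empty, hbot])]
      rw [if_pos hGe, hT, hcard, hmobG]
      ring
    · have hGne : (G : Set α) ≠ M.closure ∅ := by
        rw [hbot]
        exact fun h => hGe (Finset.coe_injective (by rw [h, Finset.coe_empty]))
      have hT : ∑ g ∈ (flats M).filter (fun g : Finset α => (g : Set α) ⊂ (G : Set α)),
          mob M g = - mob M G := by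
        rw [mob_def M G, if_neg hGne]
        ring
      rw [if_neg hGe, hT]
      ring



end MobLemmas

end Aux

open Set in
/-- For a modular coatom `X` of a simple matroid,
`χ(M, t) = (t - |E \ X|) · χ(M|X, t)`; in particular `χ(M|X, t)` divides `χ(M, t)`. -/
theorem stmt19 [Fintype α] (M : Matroid α) (hsimple : SimpleM M)
    {X : Set α} (hmod : ModularFlat M X) (hcoatom : mrk M X + 1 = mrk M M.E)
    {e : α} (he : e ∈ M.E \ X) :
    charPoly M =
        (Polynomial.X - Polynomial.C (((M.E \ X).ncard : ℤ))) * charPoly (M ↾ X) ∧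
      charPoly (M ↾ X) ∣ charPoly M := by
  have hXE : X ⊆ M.E := hmod.1.subset_ground
  have hbot : M.closure ∅ = ∅ := hsimple.closure_empty
  have hs' : SimpleM (M ↾ X) := hsimple.restrict hXE
  have hbot' : (M ↾ X).closure ∅ = ∅ := hs'.closure_empty
  have hnXE : ¬ (M.E ⊆ X) := fun h => he.2 (h he.1)
  set k : ℕ := (M.E \ X).ncard with hk
  set A := (flats M).filter (fun F : Finset α => (F : Set α) ⊆ X) with hA
  set B := (flats M).filter (fun F : Finset α => ¬ (F : Set α) ⊆ X) with hB
  -- flats of the restriction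
  have hflats : flats (M ↾ X) = A := by
    ext F
    simp only [hA, Finset.mem_filter, mem_flats, restrict_flat_iff hmod.1]
  -- the restricted characteristic polynomial
  have hchi : charPoly (M ↾ X) =
      ∑ F ∈ A, Polynomial.C (mob M F) * Polynomial.X ^ (mrk M X - mrk M ↑F) := by
    have h0 : charPoly (M ↾ X) = ∑ F ∈ flats (M ↾ X),
        Polynomial.C (mob (M ↾ X) F) *
          Polynomial.X ^ (mrk (M ↾ X) (M ↾ X).E - mrk (M ↾ X) ↑F) := rfl
    rw [h0, hflats]
    apply Finset.sum_congr rfl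
    intro F hF
    simp only [hA, Finset.mem_filter, mem_flats] at hF
    rw [mob_restrict hmod.1 hbot hbot' F hF.2,
      show (M ↾ X).E = X from rfl, mrk_restrict (subset_refl X), mrk_restrict hF.2]
  have h0 : charPoly M = ∑ F ∈ flats M,
      Polynomial.C (mob M F) * Polynomial.X ^ (mrk M M.E - mrk M ↑F) := rfl
  have hsplit : charPoly M =
      (∑ F ∈ A, Polynomial.C (mob M F) * Polynomial.X ^ (mrk M M.E - mrk M ↑F)) +
      (∑ F ∈ B, Polynomial.C (mob M F) * Polynomial.X ^ (mrk M M.E - mrk M ↑F)) := by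
    rw [h0, hA, hB]
    exact (Finset.sum_filter_add_sum_filter_not _ _ _).symm
  -- Part A
  have hpartA : (∑ F ∈ A, Polynomial.C (mob M F) *
        Polynomial.X ^ (mrk M M.E - mrk M ↑F)) =
      Polynomial.X * charPoly (M ↾ X) := by
    rw [hchi, Finset.mul_sum]
    apply Finset.sum_congr rfl
    intro F hF
    simp only [hA, Finset.mem_filter, mem_flats] at hF
    have hle : mrk M ↑F ≤ mrk M X := mrk_mono_s19 hF.2
    have hexp : mrk M M.E - mrk M ↑F = (mrk M X - mrk M ↑F) + 1 := by omega
    rw [hexp, pow_succ]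
    ring
  -- Part B
  have hpartB : (∑ F ∈ B, Polynomial.C (mob M F) *
        Polynomial.X ^ (mrk M M.E - mrk M ↑F)) =
      - (Polynomial.C (k : ℤ) * charPoly (M ↾ X)) := by
    have hmapsB : ∀ F ∈ B, X.toFinset ∩ F ∈ A := by
      intro F hF
      simp only [hB, Finset.mem_filter, mem_flats] at hF
      simp only [hA, Finset.mem_filter, mem_flats]
      have hcoe : ((X.toFinset ∩ F : Finset α) : Set α) = X ∩ (F : Set α) := by
        simp [Finset.coe_inter, Set.coe_toFinset]
      rw [hcoe]
      exact ⟨flat_inter hmod.1 hF.1, inter_subset_left⟩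
    rw [← Finset.sum_fiberwise_of_maps_to hmapsB
      (fun F => Polynomial.C (mob M F) * Polynomial.X ^ (mrk M M.E - mrk M ↑F))]
    rw [hchi, Finset.mul_sum, ← Finset.sum_neg_distrib]
    apply Finset.sum_congr rfl
    intro g hg
    simp only [hA, Finset.mem_filter, mem_flats] at hg
    obtain ⟨hgflat, hgX⟩ := hg
    -- identify the fiber with the one in fiber_count (over the ground set)
    have hfibeq : B.filter (fun F : Finset α => X.toFinset ∩ F = g) =
        (flats M).filter (fun G' : Finset α =>
          (G' : Set α) ⊆ ↑(M.E.toFinset) ∧ ¬ (G' : Set α) ⊆ X ∧ X ∩ ↑G' = ↑g) := by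
      ext F
      simp only [hB, Finset.mem_filter, mem_flats, and_assoc, Set.coe_toFinset]
      have hcoe : ((X.toFinset ∩ F : Finset α) : Set α) = X ∩ (F : Set α) := by
        simp [Finset.coe_inter, Set.coe_toFinset]
      constructor
      · rintro ⟨h1, h2, h3⟩
        exact ⟨h1, h1.subset_ground, h2, by rw [← hcoe, h3]⟩
      · rintro ⟨h1, h2, h3, h4⟩
        exact ⟨h1, h3, Finset.coe_injective (by rw [hcoe, h4])⟩
    have hEflat : M.IsFlat ↑(M.E.toFinset) := by rw [Set.coe_toFinset]; exact M.ground_isFlat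
    have hEnsub : ¬ (↑(M.E.toFinset) : Set α) ⊆ X := by rw [Set.coe_toFinset]; exact hnXE
    have hgsub : (g : Set α) ⊆ X ∩ ↑(M.E.toFinset) := by
      rw [Set.coe_toFinset]
      exact subset_inter hgX hgflat.subset_ground
    have hcount := fiber_count hmod hcoatom hEflat hEnsub hgflat hgsub
    have hkval : (M.E.toFinset \ X.toFinset).card = k := by
      rw [hk, ← Set.ncard_coe_finset]
      congr 1
      simp [Finset.coe_sdiff, Set.coe_toFinset]
    -- rewrite each term of the fiber
    have hterm : ∀ F ∈ B.filter (fun F : Finset α => X.toFinset ∩ F = g),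
        Polynomial.C (mob M F) * Polynomial.X ^ (mrk M M.E - mrk M ↑F) =
          Polynomial.C (-(((F \ X.toFinset).card : ℤ)) * mob M g) *
            Polynomial.X ^ (mrk M X - mrk M ↑g) := by
      intro F hF
      simp only [hB, Finset.mem_filter, mem_flats] at hF
      obtain ⟨⟨h1, h2⟩, h3⟩ := hF
      have hcoe : ((X.toFinset ∩ F : Finset α) : Set α) = X ∩ (F : Set α) := by
        simp [Finset.coe_inter, Set.coe_toFinset]
      have hXFg : X ∩ (F : Set α) = ↑g := by rw [← hcoe, h3]
      have hmobF := mob_fiber hsimple hmod hcoatom F h1 h2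
      rw [h3] at hmobF
      have hrF : mrk M ↑F = mrk M ↑g + 1 := by
        rw [← hXFg]
        exact mrk_inter_coatom hmod hcoatom h1 h2
      have hle : mrk M ↑g ≤ mrk M X := mrk_mono_s19 hgX
      have hexp : mrk M M.E - mrk M ↑F = mrk M X - mrk M ↑g := by omega
      rw [hmobF, hexp]
    rw [Finset.sum_congr rfl hterm]
    rw [← Finset.sum_mul]
    have hsum : ∑ F ∈ B.filter (fun F : Finset α => X.toFinset ∩ F = g),
        Polynomial.C (-(((F \ X.toFinset).card : ℤ)) * mob M g) =
        - (Polynomial.C (k : ℤ) * Polynomial.C (mob M g)) := by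
      rw [← Polynomial.C_mul, ← Polynomial.C_neg, ← map_sum]
      congr 1
      have : ∑ F ∈ B.filter (fun F : Finset α => X.toFinset ∩ F = g),
          (-(((F \ X.toFinset).card : ℤ)) * mob M g) =
          (∑ F ∈ B.filter (fun F : Finset α => X.toFinset ∩ F = g),
            -(((F \ X.toFinset).card : ℤ))) * mob M g := by
        rw [Finset.sum_mul]
      rw [this, Finset.sum_neg_distrib, ← Nat.cast_sum, hfibeq, hcount, hkval]
      ring
    rw [hsum]
    ring
  refine ⟨?_, ?_⟩
  · rw [hsplit, hpartA, hpartB]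
    ring
  · exact ⟨Polynomial.X - Polynomial.C ((k : ℤ)), by rw [hsplit, hpartA, hpartB]; ring⟩


end Paper
end
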